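/- Uniform collision probability of the hash family: let q be a prime and b an integer with 2 ≤ b ≤ q. For u chosen uniformly from {1,…,q−1} and v chosen uniformly from {0,…,q−1}, independently, define h_{u,v}(x) = ((u·x + v) mod q) mod b. Then for any two elements x, y with x ≢ y (mod q), Pr[h_{u,v}(x) = h_{u,v}(y)] = ⌊q/b⌋ · ((q mod b) + q − b) / (q·(q−1)); in particular this probability is the same for every such pair x, y. -/

import Mathlib

/-- The hash function `h_{u,v}(x) = ((u·x + v) mod q) mod b`. -/
def hashF (q b u v x : ℕ) : ℕ := ((u * x + v) % q) % b

open Finset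

private lemma count_residue (q b r : ℕ) (hb : 0 < b) (hrb : r < b) :
    ((Finset.range q).filter (fun c => c % b = r)).card = (q + b - 1 - r) / b := by
  rw [← Finset.card_range ((q + b - 1 - r) / b)]
  apply Finset.card_nbij' (fun c => c / b) (fun k => b * k + r)
  · intro c hc
    simp only [Finset.mem_coe, Finset.mem_filter, Finset.mem_range] at hc ⊢
    obtain ⟨hcq, hcr⟩ := hc
    have h1 : b * (c / b) + r = c := by rw [← hcr]; exact Nat.div_add_mod c b
    rw [Nat.lt_iff_add_one_le, Nat.le_div_iff_mul_le hb]
    have h2 : (c / b + 1) * b = b * (c / b) + b := by ring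
    omega
  · intro k hk
    simp only [Finset.mem_coe, Finset.mem_filter, Finset.mem_range] at hk ⊢
    rw [Nat.lt_iff_add_one_le, Nat.le_div_iff_mul_le hb] at hk
    have h2 : (k + 1) * b = b * k + b := by ring
    constructor
    · omega
    · simp [Nat.mul_add_mod, Nat.mod_eq_of_lt hrb]
  · intro c hc
    simp only [Finset.mem_coe, Finset.mem_filter, Finset.mem_range] at hc
    have h1 := Nat.div_add_mod c b
    dsimp only
    omega
  · intro k _
    dsimp only
    rw [Nat.mul_add_div hb, Nat.div_eq_of_lt hrb, Nat.add_zero]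

private lemma sum_sq (q b : ℕ) (hb : 0 < b) :
    ∑ r ∈ Finset.range b, ((q + b - 1 - r) / b) * ((q + b - 1 - r) / b)
      = (q % b) * (q / b + 1) * (q / b + 1) + (b - q % b) * (q / b) * (q / b) := by
  set m := q / b with hm
  set s := q % b with hs
  have hq : b * m + s = q := Nat.div_add_mod q b
  have hsb : s < b := Nat.mod_lt _ hb
  rw [Finset.range_eq_Ico, ← Finset.sum_Ico_consecutive _ (Nat.zero_le s) hsb.le]
  have e1 : ∀ r ∈ Finset.Ico 0 s, ((q + b - 1 - r) / b) * ((q + b - 1 - r) / b)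
      = (m+1)*(m+1) := by
    intro r hr
    simp only [Finset.mem_Ico] at hr
    have key : q + b - 1 - r = b * (m + 1) + (s - 1 - r) := by
      have e : b * (m + 1) = b * m + b := by ring
      omega
    rw [key, Nat.mul_add_div hb, Nat.div_eq_of_lt (by omega), Nat.add_zero]
  have e2 : ∀ r ∈ Finset.Ico s b, ((q + b - 1 - r) / b) * ((q + b - 1 - r) / b)
      = m*m := by
    intro r hr
    simp only [Finset.mem_Ico] at hr
    have key : q + b - 1 - r = b * m + (b + s - 1 - r) := by omega
    rw [key, Nat.mul_add_div hb, Nat.div_eq_of_lt (by omega), Nat.add_zero]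
  rw [Finset.sum_congr rfl e1, Finset.sum_congr rfl e2, Finset.sum_const, Finset.sum_const]
  simp [Nat.card_Ico, mul_assoc, mul_comm]
  ring

private lemma card_S (q b x y : ℕ) (hq : q.Prime) (hxy : x % q ≠ y % q) :
    ((Finset.Icc 1 (q-1) ×ˢ Finset.range q).filter
      (fun uv => hashF q b uv.1 uv.2 x = hashF q b uv.1 uv.2 y)).card
    = ((Finset.range q ×ˢ Finset.range q).filter
      (fun p => p.1 ≠ p.2 ∧ p.1 % b = p.2 % b)).card := by
  haveI := Fact.mk hq
  haveI : NeZero q := ⟨hq.pos.ne'⟩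
  have hq1 : 1 < q := hq.one_lt
  have hxyz : (x : ZMod q) ≠ y := by rwa [Ne, ZMod.natCast_eq_natCast_iff']
  have hden : (x : ZMod q) - y ≠ 0 := sub_ne_zero.mpr hxyz
  apply Finset.card_nbij'
    (fun uv => ((uv.1 * x + uv.2) % q, (uv.1 * y + uv.2) % q))
    (fun p => ((((p.1 : ZMod q) - p.2) / ((x : ZMod q) - y)).val,
               ((p.1 : ZMod q) - (((p.1 : ZMod q) - p.2) / ((x : ZMod q) - y)) * x).val))
  · -- forward membership
    rintro ⟨u, v⟩ huv
    simp only [Finset.mem_coe, Finset.mem_filter, Finset.mem_product, Finset.mem_Icc, Finset.mem_range] at huv ⊢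
    obtain ⟨⟨⟨hu1, hu2⟩, hv⟩, hcol⟩ := huv
    have huq : u < q := by omega
    refine ⟨⟨Nat.mod_lt _ hq.pos, Nat.mod_lt _ hq.pos⟩, ?_, ?_⟩
    · intro he
      have : (((u * x + v) % q : ℕ) : ZMod q) = (((u * y + v) % q : ℕ) : ZMod q) := by rw [he]
      rw [ZMod.natCast_mod, ZMod.natCast_mod] at this
      push_cast at this
      have h2 : (u : ZMod q) * ((x : ZMod q) - y) = 0 := by ring_nf; linear_combination this
      have hu0 : (u : ZMod q) ≠ 0 := by
        simp only [Ne, ZMod.natCast_eq_zero_iff]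
        intro hdvd
        exact absurd (Nat.eq_zero_of_dvd_of_lt hdvd huq) (by omega)
      rcases mul_eq_zero.mp h2 with h | h
      · exact hu0 h
      · exact hden h
    · exact hcol
  · -- backward membership
    rintro ⟨a, c⟩ hac
    simp only [Finset.mem_coe, Finset.mem_filter, Finset.mem_product, Finset.mem_Icc, Finset.mem_range] at hac ⊢
    obtain ⟨⟨ha, hc⟩, hne, hmod⟩ := hac
    set u : ZMod q := (((a : ZMod q) - c) / ((x : ZMod q) - y)) with hu
    set v : ZMod q := (a : ZMod q) - u * x with hv
    have hu0 : u ≠ 0 := by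
      rw [hu, div_ne_zero_iff]
      refine ⟨sub_ne_zero.mpr ?_, hden⟩
      intro he
      apply hne
      have := congrArg ZMod.val he
      rwa [ZMod.val_natCast_of_lt ha, ZMod.val_natCast_of_lt hc] at this
    have fact2 : (u.val * x + v.val) % q = a := by
      have e : ((u.val * x + v.val : ℕ) : ZMod q) = (a : ZMod q) := by
        push_cast
        rw [ZMod.natCast_rightInverse u, ZMod.natCast_rightInverse v, hv]
        ring
      calc (u.val * x + v.val) % q = ((u.val * x + v.val : ℕ) : ZMod q).val := by
            rw [ZMod.val_natCast]
        _ = a := by rw [e, ZMod.val_natCast_of_lt ha]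
    have fact3 : (u.val * y + v.val) % q = c := by
      have e : ((u.val * y + v.val : ℕ) : ZMod q) = (c : ZMod q) := by
        push_cast
        rw [ZMod.natCast_rightInverse u, ZMod.natCast_rightInverse v, hv, hu]
        have : (((a : ZMod q) - c) / ((x : ZMod q) - y)) * ((x : ZMod q) - y)
            = (a : ZMod q) - c := div_mul_cancel₀ _ hden
        linear_combination -this
      calc (u.val * y + v.val) % q = ((u.val * y + v.val : ℕ) : ZMod q).val := by
            rw [ZMod.val_natCast]
        _ = c := by rw [e, ZMod.val_natCast_of_lt hc]
    refine ⟨⟨⟨?_, ?_⟩, ZMod.val_lt v⟩, ?_⟩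
    · have := (ZMod.val_eq_zero u).not.mpr hu0
      omega
    · have := ZMod.val_lt u
      omega
    · show ((u.val * x + v.val) % q) % b = ((u.val * y + v.val) % q) % b
      rw [fact2, fact3]; exact hmod
  · -- left inverse
    rintro ⟨u, v⟩ huv
    simp only [Finset.mem_coe, Finset.mem_filter, Finset.mem_product, Finset.mem_Icc, Finset.mem_range] at huv
    obtain ⟨⟨⟨hu1, hu2⟩, hv⟩, _⟩ := huv
    have huq : u < q := by omega
    have e1 : (((u * x + v) % q : ℕ) : ZMod q) = (u : ZMod q) * x + v := by
      rw [ZMod.natCast_mod]; push_cast; ring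
    have e2 : (((u * y + v) % q : ℕ) : ZMod q) = (u : ZMod q) * y + v := by
      rw [ZMod.natCast_mod]; push_cast; ring
    have e3 : ((((u * x + v) % q : ℕ) : ZMod q) - (((u * y + v) % q : ℕ) : ZMod q))
        / ((x : ZMod q) - y) = (u : ZMod q) := by
      rw [e1, e2]
      rw [show (u : ZMod q) * x + v - ((u : ZMod q) * y + v) = (u : ZMod q) * ((x : ZMod q) - y)
        by ring]
      exact mul_div_cancel_right₀ _ hden
    have e4 : (((u * x + v) % q : ℕ) : ZMod q) - (u : ZMod q) * x = (v : ZMod q) := by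
      rw [e1]; ring
    ext
    · simp only
      rw [e3, ZMod.val_natCast_of_lt huq]
    · simp only
      rw [e3, e4, ZMod.val_natCast_of_lt hv]
  · -- right inverse
    rintro ⟨a, c⟩ hac
    simp only [Finset.mem_coe, Finset.mem_filter, Finset.mem_product, Finset.mem_Icc, Finset.mem_range] at hac
    obtain ⟨⟨ha, hc⟩, hne, hmod⟩ := hac
    set u : ZMod q := (((a : ZMod q) - c) / ((x : ZMod q) - y)) with hu
    set v : ZMod q := (a : ZMod q) - u * x with hv
    have fact2 : (u.val * x + v.val) % q = a := by
      have e : ((u.val * x + v.val : ℕ) : ZMod q) = (a : ZMod q) := by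
        push_cast
        rw [ZMod.natCast_rightInverse u, ZMod.natCast_rightInverse v, hv]
        ring
      calc (u.val * x + v.val) % q = ((u.val * x + v.val : ℕ) : ZMod q).val := by
            rw [ZMod.val_natCast]
        _ = a := by rw [e, ZMod.val_natCast_of_lt ha]
    have fact3 : (u.val * y + v.val) % q = c := by
      have e : ((u.val * y + v.val : ℕ) : ZMod q) = (c : ZMod q) := by
        push_cast
        rw [ZMod.natCast_rightInverse u, ZMod.natCast_rightInverse v, hv, hu]
        have : (((a : ZMod q) - c) / ((x : ZMod q) - y)) * ((x : ZMod q) - y)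
            = (a : ZMod q) - c := div_mul_cancel₀ _ hden
        linear_combination -this
      calc (u.val * y + v.val) % q = ((u.val * y + v.val : ℕ) : ZMod q).val := by
            rw [ZMod.val_natCast]
        _ = c := by rw [e, ZMod.val_natCast_of_lt hc]
    ext
    · exact fact2
    · exact fact3

private lemma card_T (q b : ℕ) (hb2 : 2 ≤ b) (hbq : b ≤ q) :
    ((Finset.range q ×ˢ Finset.range q).filter
      (fun p => p.1 ≠ p.2 ∧ p.1 % b = p.2 % b)).card
    = (q % b) * (q / b + 1) * (q / b + 1) + (b - q % b) * (q / b) * (q / b) - q := by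
  have hb : 0 < b := by omega
  set E := (Finset.range q ×ˢ Finset.range q).filter (fun p => p.1 % b = p.2 % b) with hE
  have hEcard : E.card = (q % b) * (q / b + 1) * (q / b + 1)
      + (b - q % b) * (q / b) * (q / b) := by
    rw [hE, Finset.card_eq_sum_card_fiberwise (f := fun p => p.1 % b) (t := Finset.range b)
      (fun p _ => Finset.mem_range.mpr (Nat.mod_lt _ hb))]
    rw [← sum_sq q b hb]
    apply Finset.sum_congr rfl
    intro r hr
    have hrb : r < b := Finset.mem_range.mp hr
    have : (E.filter (fun p => p.1 % b = r))
        = ((Finset.range q).filter (fun c => c % b = r)) ×ˢ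
          ((Finset.range q).filter (fun c => c % b = r)) := by
      ext ⟨a, c⟩
      simp only [hE, Finset.mem_filter, Finset.mem_product, Finset.mem_range]
      constructor
      · rintro ⟨⟨⟨h1, h2⟩, h3⟩, h4⟩; exact ⟨⟨h1, h4⟩, ⟨h2, by omega⟩⟩
      · rintro ⟨⟨h1, h2⟩, h3, h4⟩; exact ⟨⟨⟨h1, h3⟩, by omega⟩, h2⟩
    rw [this, Finset.card_product, count_residue q b r hb hrb]
  have hdiag : (E.filter (fun p => p.1 = p.2)).card = q := by
    rw [← Finset.card_range q]
    apply Finset.card_nbij' (fun p => p.1) (fun a => (a, a))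
    · rintro ⟨a, c⟩ h
      simp only [Finset.mem_coe, hE, Finset.mem_filter, Finset.mem_product, Finset.mem_range] at h ⊢
      exact h.1.1.1
    · intro a ha
      simp only [Finset.mem_coe, Finset.mem_range] at ha
      simp [hE, ha]
    · rintro ⟨a, c⟩ h
      simp only [Finset.mem_coe, hE, Finset.mem_filter] at h
      simp [h.2]
    · intro a _; rfl
  have hT : (Finset.range q ×ˢ Finset.range q).filter
      (fun p => p.1 ≠ p.2 ∧ p.1 % b = p.2 % b) = E.filter (fun p => ¬ p.1 = p.2) := by
    rw [hE, Finset.filter_filter]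
    apply Finset.filter_congr
    intro p _
    simp only [Ne]
    tauto
  have hsplit := Finset.card_filter_add_card_filter_not
    (s := E) (p := fun p => p.1 = p.2)
  rw [hT]
  omega


theorem stmt12 (q b : ℕ) (hq : q.Prime) (hb2 : 2 ≤ b) (hbq : b ≤ q)
    (x y : ℕ) (hxy : x % q ≠ y % q) :
    ((PMF.uniformOfFinset (Finset.Icc 1 (q - 1) ×ˢ Finset.range q)
        (Finset.Nonempty.product ⟨1, by simp; omega⟩ ⟨0, by simp [hq.pos]⟩)).toOuterMeasure
      {uv | hashF q b uv.1 uv.2 x = hashF q b uv.1 uv.2 y}).toReal =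
    ((q / b : ℕ) : ℝ) * (((q % b : ℕ) : ℝ) + (q : ℝ) - (b : ℝ)) / ((q : ℝ) * ((q : ℝ) - 1)) := by
  classical
  rw [PMF.toOuterMeasure_uniformOfFinset_apply]
  simp only [Set.mem_setOf_eq]
  rw [Finset.filter_congr_decidable, card_S q b x y hq hxy, card_T q b hb2 hbq]
  have hq2 : 2 ≤ q := le_trans hb2 hbq
  have hb : 0 < b := by omega
  set m := q / b with hm
  set s := q % b with hs
  have hqe : b * m + s = q := Nat.div_add_mod q b
  have hsb : s < b := Nat.mod_lt _ hb
  have hm1 : 1 ≤ m := (Nat.one_le_div_iff hb).mpr hbq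
  have t1 : s * (m + 1) ≤ s * (m + 1) * (m + 1) := Nat.le_mul_of_pos_right _ (by omega)
  have t2 : (b - s) * m ≤ (b - s) * m * m := Nat.le_mul_of_pos_right _ (by omega)
  have e1 : s * (m + 1) = s * m + s := by ring
  have e2 : (b - s) * m = b * m - s * m := Nat.sub_mul b s m
  have e3 : s * m ≤ b * m := Nat.mul_le_mul_right _ (by omega)
  have hqA : q ≤ s * (m + 1) * (m + 1) + (b - s) * m * m := by omega
  have hcardP : (Finset.Icc 1 (q - 1) ×ˢ Finset.range q).card = (q - 1) * q := by
    simp [Nat.card_Icc]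
  rw [hcardP, ENNReal.toReal_div, ENNReal.toReal_natCast, ENNReal.toReal_natCast]
  have hqR : (b : ℝ) * (m : ℝ) + (s : ℝ) = (q : ℝ) := by exact_mod_cast hqe
  have hq0 : (q : ℝ) ≠ 0 := by positivity
  have hq1 : (q : ℝ) - 1 ≠ 0 := by
    have : (2 : ℝ) ≤ (q : ℝ) := by exact_mod_cast hq2
    linarith
  rw [Nat.cast_sub hqA]
  push_cast [Nat.cast_sub hsb.le, Nat.cast_sub (by omega : 1 ≤ q)]
  rw [div_eq_div_iff (by positivity) (by positivity)]
  linear_combination ((m : ℝ) + 1) * (q : ℝ) * ((q : ℝ) - 1) * hqR
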